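/- Let M be a continuous strictly increasing bijection of [0,∞) with M(1) = 1, and define the Matuszewska-type indices α₀(M) = sup_{t₀∈(0,1]} α₀(M,t₀) and α₁(M) = inf_{t₀∈(0,1]} α₁(M,t₀), where α₀(M,t₀) = sup{ r > 0 : sup_{λ∈(0,1],t∈(0,t₀]} M(λt)/(M(λ)t^r) < ∞ } and α₁(M,t₀) = inf{ r > 0 : inf_{λ∈(0,1],t∈(0,t₀]} M(λt)/(M(λ)t^r) > 0 }. Then α₀(M⁻¹) = α₁(M)⁻¹ and α₁(M⁻¹) = α₀(M)⁻¹. -/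
import Mathlib


open Set
open scoped ENNReal

/-- `M` belongs to the class `𝓕` of continuous strictly increasing bijections of `[0,∞)`. -/
def MemFcal (M : ℝ → ℝ) : Prop :=
  ContinuousOn M (Ici 0) ∧ StrictMonoOn M (Ici 0) ∧ BijOn M (Ici 0) (Ici 0)

def S0 (M : ℝ → ℝ) (t₀ : ℝ) : Set ℝ :=
  {r | 0 < r ∧ ∃ C : ℝ, ∀ l ∈ Ioc (0 : ℝ) 1, ∀ t ∈ Ioc (0 : ℝ) t₀,
    M (l * t) ≤ C * (M l * t ^ r)}

def S1 (M : ℝ → ℝ) (t₀ : ℝ) : Set ℝ :=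
  {r | 0 < r ∧ ∃ c : ℝ, 0 < c ∧ ∀ l ∈ Ioc (0 : ℝ) 1, ∀ t ∈ Ioc (0 : ℝ) t₀,
    c * (M l * t ^ r) ≤ M (l * t)}

noncomputable def alpha0 (M : ℝ → ℝ) (t₀ : ℝ) : ℝ≥0∞ :=
  ⨆ r ∈ S0 M t₀, ENNReal.ofReal r

noncomputable def alpha1 (M : ℝ → ℝ) (t₀ : ℝ) : ℝ≥0∞ :=
  ⨅ r ∈ S1 M t₀, ENNReal.ofReal r

/-- The lower Matuszewska-type index `α₀(M)`. -/
noncomputable def alpha0' (M : ℝ → ℝ) : ℝ≥0∞ := ⨆ t₀ ∈ Ioc (0 : ℝ) 1, alpha0 M t₀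

/-- The upper Matuszewska-type index `α₁(M)`. -/
noncomputable def alpha1' (M : ℝ → ℝ) : ℝ≥0∞ := ⨅ t₀ ∈ Ioc (0 : ℝ) 1, alpha1 M t₀

/-- A pair of mutually inverse normalized strictly monotone maps of `[0,∞)`. -/
def GoodPair (N ψ : ℝ → ℝ) : Prop :=
  StrictMonoOn N (Ici 0) ∧ MapsTo N (Ici 0) (Ici 0) ∧ N 0 = 0 ∧ N 1 = 1 ∧
    MapsTo ψ (Ici 0) (Ici 0) ∧ InvOn ψ N (Ici 0) (Ici 0)

lemma GoodPair.symm {N ψ : ℝ → ℝ} (h : GoodPair N ψ) : GoodPair ψ N := by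
  obtain ⟨hmono, hNmaps, hN0, hN1, hψmaps, hinv⟩ := h
  refine ⟨?_, hψmaps, ?_, ?_, hNmaps, hinv.symm⟩
  · intro a ha b hb hab
    have h2 := (hmono.lt_iff_lt (hψmaps ha) (hψmaps hb)).mp
    rw [hinv.2 ha, hinv.2 hb] at h2
    exact h2 hab
  · have := hinv.1 (le_refl (0:ℝ) : (0:ℝ) ∈ Ici 0)
    rwa [hN0] at this
  · have := hinv.1 (by norm_num : (1:ℝ) ∈ Ici 0)
    rwa [hN1] at this

lemma lemA {N ψ : ℝ → ℝ} (h : GoodPair N ψ) {t₀ r : ℝ}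
    (ht₀ : t₀ ∈ Ioc (0:ℝ) 1) (hr : r ∈ S1 N t₀) :
    ∃ t₀' ∈ Ioc (0:ℝ) 1, r⁻¹ ∈ S0 ψ t₀' := by
  obtain ⟨hψmono, -, hψ0, hψ1, -, -⟩ := h.symm
  obtain ⟨hmono, hNmaps, hN0, hN1, hψmaps, hinv⟩ := h
  obtain ⟨hrpos, c, hc, hineq⟩ := hr
  have ht₀pow : (0:ℝ) < t₀ ^ r := Real.rpow_pos_of_pos ht₀.1 r
  refine ⟨min 1 (c * t₀ ^ r), ⟨lt_min one_pos (mul_pos hc ht₀pow), min_le_left _ _⟩,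
    inv_pos.mpr hrpos, (c ^ r⁻¹)⁻¹, ?_⟩
  intro u hu v hv
  have hu0 : (0:ℝ) < u := hu.1
  have hv0 : (0:ℝ) < v := hv.1
  have hvc : v ≤ c * t₀ ^ r := le_trans hv.2 (min_le_right _ _)
  set l := ψ u with hl_def
  set t := (v / c) ^ r⁻¹ with ht_def
  have hl0 : 0 < l := by
    have := hψmono (le_refl (0:ℝ)) hu0.le hu0
    rwa [hψ0] at this
  have hl1 : l ≤ 1 := by
    have := hψmono.monotoneOn hu0.le (by norm_num : (1:ℝ) ∈ Ici 0) hu.2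
    rwa [hψ1] at this
  have hvcpos : (0:ℝ) < v / c := div_pos hv0 hc
  have ht0 : 0 < t := Real.rpow_pos_of_pos hvcpos _
  have htt₀ : t ≤ t₀ := by
    have h1 : v / c ≤ t₀ ^ r := (div_le_iff₀ hc).mpr (by linarith [hvc])
    calc t ≤ (t₀ ^ r) ^ r⁻¹ := Real.rpow_le_rpow hvcpos.le h1 (inv_nonneg.mpr hrpos.le)
    _ = t₀ := by rw [← Real.rpow_mul ht₀.1.le, mul_inv_cancel₀ hrpos.ne', Real.rpow_one]
  have key := hineq l ⟨hl0, hl1⟩ t ⟨ht0, htt₀⟩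
  have hNl : N l = u := hinv.2 hu0.le
  have htr : t ^ r = v / c := by
    rw [ht_def, ← Real.rpow_mul hvcpos.le, inv_mul_cancel₀ hrpos.ne', Real.rpow_one]
  rw [hNl, htr] at key
  have hcu : c * (u * (v / c)) = u * v := by field_simp
  rw [hcu] at key
  have hlt0 : (0:ℝ) ≤ l * t := by positivity
  have huv0 : (0:ℝ) ≤ u * v := by positivity
  have hmono' : ψ (u * v) ≤ ψ (N (l * t)) :=
    hψmono.monotoneOn huv0 (hNmaps hlt0) key
  rw [hinv.1 hlt0] at hmono'
  have heq : l * t = (c ^ r⁻¹)⁻¹ * (ψ u * v ^ r⁻¹) := by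
    rw [ht_def, Real.div_rpow hv0.le hc.le, div_eq_mul_inv]
    ring
  rw [heq] at hmono'
  exact hmono'

lemma lemB {N ψ : ℝ → ℝ} (h : GoodPair N ψ) {t₀ r : ℝ}
    (ht₀ : t₀ ∈ Ioc (0:ℝ) 1) (hr : r ∈ S0 N t₀) :
    ∃ t₀' ∈ Ioc (0:ℝ) 1, r⁻¹ ∈ S1 ψ t₀' := by
  obtain ⟨hψmono, -, hψ0, hψ1, -, -⟩ := h.symm
  obtain ⟨hmono, hNmaps, hN0, hN1, hψmaps, hinv⟩ := h
  obtain ⟨hrpos, C, hineq⟩ := hr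
  have ht₀pow : (0:ℝ) < t₀ ^ r := Real.rpow_pos_of_pos ht₀.1 r
  have hC : 0 < C := by
    have h1 := hineq 1 ⟨one_pos, le_refl 1⟩ t₀ ⟨ht₀.1, le_refl t₀⟩
    have h2 : 0 < N t₀ := by
      have := hmono (le_refl (0:ℝ)) ht₀.1.le ht₀.1
      rwa [hN0] at this
    rw [one_mul, hN1, one_mul] at h1
    nlinarith
  refine ⟨min 1 (C * t₀ ^ r), ⟨lt_min one_pos (mul_pos hC ht₀pow), min_le_left _ _⟩,
    inv_pos.mpr hrpos, (C ^ r⁻¹)⁻¹,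
    inv_pos.mpr (Real.rpow_pos_of_pos hC _), ?_⟩
  intro u hu v hv
  have hu0 : (0:ℝ) < u := hu.1
  have hv0 : (0:ℝ) < v := hv.1
  have hvc : v ≤ C * t₀ ^ r := le_trans hv.2 (min_le_right _ _)
  set l := ψ u with hl_def
  set t := (v / C) ^ r⁻¹ with ht_def
  have hl0 : 0 < l := by
    have := hψmono (le_refl (0:ℝ)) hu0.le hu0
    rwa [hψ0] at this
  have hl1 : l ≤ 1 := by
    have := hψmono.monotoneOn hu0.le (by norm_num : (1:ℝ) ∈ Ici 0) hu.2
    rwa [hψ1] at this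
  have hvcpos : (0:ℝ) < v / C := div_pos hv0 hC
  have ht0 : 0 < t := Real.rpow_pos_of_pos hvcpos _
  have htt₀ : t ≤ t₀ := by
    have h1 : v / C ≤ t₀ ^ r := (div_le_iff₀ hC).mpr (by linarith [hvc])
    calc t ≤ (t₀ ^ r) ^ r⁻¹ := Real.rpow_le_rpow hvcpos.le h1 (inv_nonneg.mpr hrpos.le)
    _ = t₀ := by rw [← Real.rpow_mul ht₀.1.le, mul_inv_cancel₀ hrpos.ne', Real.rpow_one]
  have key := hineq l ⟨hl0, hl1⟩ t ⟨ht0, htt₀⟩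
  have hNl : N l = u := hinv.2 hu0.le
  have htr : t ^ r = v / C := by
    rw [ht_def, ← Real.rpow_mul hvcpos.le, inv_mul_cancel₀ hrpos.ne', Real.rpow_one]
  rw [hNl, htr] at key
  have hcu : C * (u * (v / C)) = u * v := by field_simp
  rw [hcu] at key
  have hlt0 : (0:ℝ) ≤ l * t := by positivity
  have huv0 : (0:ℝ) ≤ u * v := by positivity
  have hmono' : ψ (N (l * t)) ≤ ψ (u * v) :=
    hψmono.monotoneOn (hNmaps hlt0) huv0 key
  rw [hinv.1 hlt0] at hmono'
  have heq : l * t = (C ^ r⁻¹)⁻¹ * (ψ u * v ^ r⁻¹) := by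
    rw [ht_def, Real.div_rpow hv0.le hC.le, div_eq_mul_inv]
    ring
  rw [heq] at hmono'
  exact hmono'

lemma ineq1 {N ψ : ℝ → ℝ} (h : GoodPair N ψ) : alpha0' N ≤ (alpha1' ψ)⁻¹ := by
  unfold alpha0' alpha0
  refine iSup₂_le fun t₀ ht₀ => iSup₂_le fun r hr => ?_
  obtain ⟨t₀', ht₀', hr'⟩ := lemB h ht₀ hr
  have h1 : alpha1' ψ ≤ ENNReal.ofReal r⁻¹ := by
    unfold alpha1' alpha1
    exact iInf₂_le_of_le t₀' ht₀' (iInf₂_le r⁻¹ hr')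
  have h2 := ENNReal.inv_le_inv.mpr h1
  rwa [ENNReal.ofReal_inv_of_pos hr.1, inv_inv] at h2

lemma ineq2 {N ψ : ℝ → ℝ} (h : GoodPair N ψ) : (alpha0' ψ)⁻¹ ≤ alpha1' N := by
  unfold alpha1' alpha1
  refine le_iInf₂ fun t₀ ht₀ => le_iInf₂ fun r hr => ?_
  obtain ⟨t₀', ht₀', hr'⟩ := lemA h ht₀ hr
  have h1 : ENNReal.ofReal r⁻¹ ≤ alpha0' ψ := by
    unfold alpha0' alpha0
    exact le_iSup₂_of_le t₀' ht₀' (le_iSup₂ (f := fun s (_ : s ∈ S0 ψ t₀') => ENNReal.ofReal s) r⁻¹ hr')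
  have h2 := ENNReal.inv_le_inv.mpr h1
  rwa [ENNReal.ofReal_inv_of_pos hr.1, inv_inv] at h2

/-- for `M ∈ 𝓕` with `M(1) = 1` and inverse `φ`,
`α₀(M⁻¹) = α₁(M)⁻¹` and `α₁(M⁻¹) = α₀(M)⁻¹`. -/
theorem matuszewska_indices_of_inverse
    (M φ : ℝ → ℝ) (hM : MemFcal M) (hM1 : M 1 = 1)
    (hφ : MapsTo φ (Ici 0) (Ici 0)) (hφinv : InvOn φ M (Ici 0) (Ici 0)) :
    alpha0' φ = (alpha1' M)⁻¹ ∧ alpha1' φ = (alpha0' M)⁻¹ := by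
  obtain ⟨hMc, hMmono, hMbij⟩ := hM
  have hMφ0 : M (φ 0) = 0 := hφinv.2 (le_refl (0:ℝ))
  have hφ0 : φ 0 = 0 := by
    by_contra hne
    have h0 : (0:ℝ) ≤ φ 0 := hφ (le_refl (0:ℝ))
    have h0' : 0 < φ 0 := lt_of_le_of_ne h0 (Ne.symm hne)
    have h1 : M 0 < M (φ 0) := hMmono (le_refl (0:ℝ)) h0 h0'
    have h2 : (0:ℝ) ≤ M 0 := hMbij.1 (le_refl (0:ℝ))
    rw [hMφ0] at h1
    linarith
  have hM0 : M 0 = 0 := by nth_rewrite 1 [← hφ0]; exact hMφ0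
  have hgp : GoodPair M φ := ⟨hMmono, hMbij.1, hM0, hM1, hφ, hφinv⟩
  have hgp' : GoodPair φ M := hgp.symm
  constructor
  · refine le_antisymm (ineq1 hgp') ?_
    have h2 := ENNReal.inv_le_inv.mpr (ineq2 hgp)
    rwa [inv_inv] at h2
  · refine le_antisymm ?_ (ineq2 hgp')
    have h2 := ENNReal.inv_le_inv.mpr (ineq1 hgp)
    rwa [inv_inv] at h2
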